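/- Let θ : A → A^λ be a primitive substitution of constant length λ ≥ 2 with θ(a₀)_0 = a₀, fixed point u ∈ A^ℕ, and column number c(θ) = 1. Then for every ε > 0 there exist k ≥ 1 and a λ^k-periodic sequence v ∈ A^ℕ with d_W(u, v) < ε; in particular, u is Weyl rationally almost periodic. -/

import Mathlib

open Filter Topology

/-- `substIter θ l k a j` is the `j`-th letter of `θ^k(a)`, where `θ : A → A^l` is a
substitution of constant length `l` (the letters of `θ(a)` being `θ a 0, …, θ a (l-1)`).
It is meaningful for `j < l ^ k` and satisfies
`θ^{k+1}(a)_{j'·l + r} = θ(θ^k(a)_{j'})_r`. -/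
def substIter {A : Type*} (θ : A → ℕ → A) (l : ℕ) : ℕ → A → ℕ → A
  | 0, a, _ => a
  | k + 1, a, j => θ (substIter θ l k a (j / l)) (j % l)

/-- A substitution of constant length `l` is primitive if some iterate of every letter
contains every letter. -/
def SubstPrimitive {A : Type*} (θ : A → ℕ → A) (l : ℕ) : Prop :=
  ∃ k, 1 ≤ k ∧ ∀ a b : A, ∃ j, j < l ^ k ∧ substIter θ l k a j = b

/-- Primitivity of a substitution restricted to a sub-alphabet `S`. -/
def SubstPrimitiveOn {A : Type*} (θ : A → ℕ → A) (l : ℕ) (S : Set A) : Prop :=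
  ∃ k, 1 ≤ k ∧ ∀ a ∈ S, ∀ b ∈ S, ∃ j, j < l ^ k ∧ substIter θ l k a j = b

/-- The column number of a substitution of constant length `l`, restricted to the
sub-alphabet `S`: the minimal cardinality of a column set `{θ^k(a)_j : a ∈ S}`. -/
noncomputable def columnNumberOn {A : Type*} (θ : A → ℕ → A) (l : ℕ) (S : Set A) : ℕ :=
  sInf { n : ℕ | ∃ k, 1 ≤ k ∧ ∃ j, j < l ^ k ∧
    ((fun a => substIter θ l k a j) '' S).ncard = n }

/-- The column number `c(θ)` of a substitution of constant length `l`. -/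
noncomputable def columnNumber {A : Type*} (θ : A → ℕ → A) (l : ℕ) : ℕ :=
  columnNumberOn θ l Set.univ

/-- The one-sided fixed point `u` of `θ` obtained by iterating `θ` at a letter `a₀`
with `θ(a₀)_0 = a₀`: `u n = θ^k(a₀)_n` for any `k` with `n < l^k`. -/
def substFixedPoint {A : Type*} (θ : A → ℕ → A) (l : ℕ) (a₀ : A) : ℕ → A :=
  fun n => substIter θ l (n + 1) a₀ n

/-- The height `h(θ)`: the largest `m ≥ 1` coprime to `l` dividing
`gcd {r ≥ 1 : u[r] = u[0]}`, i.e. dividing every return time of `u[0]`. -/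
noncomputable def substHeight {A : Type*} (θ : A → ℕ → A) (l : ℕ) (a₀ : A) : ℕ :=
  sSup { m : ℕ | 1 ≤ m ∧ Nat.Coprime m l ∧
    ∀ r : ℕ, 1 ≤ r → substFixedPoint θ l a₀ r = substFixedPoint θ l a₀ 0 → m ∣ r }

/-- The subshift `X_θ ⊆ A^ℤ`: all `x` each of whose finite blocks occurs in some
`θ^k(a)`. -/
def subshift {A : Type*} (θ : A → ℕ → A) (l : ℕ) : Set (ℤ → A) :=
  { x | ∀ (i : ℤ) (n : ℕ), ∃ k, 1 ≤ k ∧ ∃ a : A, ∃ j : ℕ, j + n ≤ l ^ k ∧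
      ∀ m : ℕ, m < n → x (i + (m : ℤ)) = substIter θ l k a (j + m) }

/-- The subshift `X_x ⊆ A^ℤ` generated by a one-sided sequence `x ∈ A^ℕ`: all `z`
each of whose finite blocks occurs in `x`. -/
def subshiftOf {A : Type*} (x : ℕ → A) : Set (ℤ → A) :=
  { z | ∀ (i : ℤ) (n : ℕ), ∃ j : ℕ, ∀ m : ℕ, m < n → z (i + (m : ℤ)) = x (j + m) }

/-- The left shift on `A^ℤ`. -/
def shift {A : Type*} (x : ℤ → A) : ℤ → A := fun n => x (n + 1)

/-- A bounded arithmetic function. -/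
def BoundedSeq (u : ℕ → ℂ) : Prop := ∃ C : ℝ, ∀ n, ‖u n‖ ≤ C

/-- A multiplicative arithmetic function: `u(mn) = u(m)u(n)` for coprime `m, n`. -/
def MultiplicativeSeq (u : ℕ → ℂ) : Prop :=
  ∀ m n : ℕ, Nat.Coprime m n → u (m * n) = u m * u n

/-- An aperiodic arithmetic function: zero mean along every arithmetic progression. -/
def AperiodicSeq (u : ℕ → ℂ) : Prop :=
  ∀ a b : ℕ, 1 ≤ a →
    Tendsto (fun N : ℕ => (N : ℂ)⁻¹ * ∑ n ∈ Finset.Icc 1 N, u (a * n + b)) atTop (nhds 0)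

/-- The Weyl pseudo-metric
`d_W(x,y) = limsup_N sup_{ℓ ≥ 1} (1/N)·#{ℓ ≤ n < ℓ+N : x n ≠ y n}`. -/
noncomputable def weylDist {B : Type*} (x y : ℕ → B) : ℝ :=
  limsup (fun N : ℕ =>
    ⨆ ℓ : ℕ, ⨆ _ : 1 ≤ ℓ,
      (({ n : ℕ | ℓ ≤ n ∧ n < ℓ + N ∧ x n ≠ y n }.ncard : ℝ) / N)) atTop

/-- A periodic sequence. -/
def IsPeriodicSeq {B : Type*} (v : ℕ → B) : Prop :=
  ∃ p, 1 ≤ p ∧ ∀ n, v (n + p) = v n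

/-- Weyl rational almost periodicity: a `d_W`-limit of periodic sequences. -/
def WRAPSeq {B : Type*} (x : ℕ → B) : Prop :=
  ∀ ε : ℝ, 0 < ε → ∃ v : ℕ → B, IsPeriodicSeq v ∧ weylDist x v < ε

/-- The family `𝒳(θ)` of column sets realizing the column number of `θ`. -/
noncomputable def columnSets {A : Type*} (θ : A → ℕ → A) (l : ℕ) : Set (Set A) :=
  { M | (∃ k, 1 ≤ k ∧ ∃ j, j < l ^ k ∧ M = (fun a => substIter θ l k a j) '' Set.univ) ∧
        M.ncard = columnNumber θ l }

/-- The synchronizing part `~θ` of `θ`, as a substitution on subsets of the alphabet: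
`~θ(M)_j = {θ(a)_j : a ∈ M}`. -/
def synchPart {A : Type*} (θ : A → ℕ → A) : Set A → ℕ → Set A :=
  fun M j => (fun a => θ a j) '' M

/-- The joining `θ ∨ ζ` of two substitutions of the same constant length. -/
def joinSub {A B : Type*} (θ : A → ℕ → A) (ζ : B → ℕ → B) : A × B → ℕ → A × B :=
  fun p j => (θ p.1 j, ζ p.2 j)

/-- The pure base `θ^{(h)}` of `θ`: a substitution of length `l` on blocks of length `h`,
`θ^{(h)}(w)_j = θ(w)[jh, (j+1)h−1]`, where `θ(w)` is the concatenation
`θ(w_0)…θ(w_{h-1})`. -/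
def pureBase {A : Type*} (θ : A → ℕ → A) (l h : ℕ) : (Fin h → A) → ℕ → (Fin h → A) :=
  fun w j i => θ (w ⟨(j * h + i.val) / l % h, Nat.mod_lt _ i.pos⟩) ((j * h + i.val) % l)

/-- Iterated cocycle `σ^{(k)}`, with `σ^{(1)} = σ` and
`σ^{(k+1)}(M, j₁·l + j₂) = σ^{(k)}(M, j₁) ∘ σ(~θ^k(M)_{j₁}, j₂)`. -/
def sigmaIter {X : Type*} {c : ℕ} (tilde : X → ℕ → X)
    (σ : X → ℕ → Equiv.Perm (Fin c)) (l : ℕ) : ℕ → X → ℕ → Equiv.Perm (Fin c)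
  | 0, _, _ => 1
  | k + 1, M, j =>
      sigmaIter tilde σ l k M (j / l) * σ (substIter tilde l k M (j / l)) (j % l)

/-- The group extension substitution `Θ̂(g, M)_j = (g ∘ σ(M,j), ~θ(M)_j)`. -/
def hatTheta {X : Type*} {c : ℕ} (tilde : X → ℕ → X)
    (σ : X → ℕ → Equiv.Perm (Fin c)) : Equiv.Perm (Fin c) × X → ℕ → Equiv.Perm (Fin c) × X :=
  fun p j => (p.1 * σ p.2 j, tilde p.2 j)

/-- The group `G` generated by the cocycle values `σ(M, j)`, `M ∈ 𝒳`, `j < l`. -/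
def cocycleGroup {X : Type*} {c : ℕ} (σ : X → ℕ → Equiv.Perm (Fin c)) (l : ℕ) :
    Subgroup (Equiv.Perm (Fin c)) :=
  Subgroup.closure { g | ∃ M : X, ∃ j, j < l ∧ g = σ M j }



lemma substIter_add {A : Type*} (θ : A → ℕ → A) (l : ℕ) (k2 k1 : ℕ) (a : A) (j : ℕ) :
    substIter θ l (k1 + k2) a j
      = substIter θ l k2 (substIter θ l k1 a (j / l ^ k2)) (j % l ^ k2) := by
  induction k2 generalizing j with
  | zero => simp [substIter]
  | succ k ih =>
      show substIter θ l ((k1 + k) + 1) a j = _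
      rw [substIter, ih, substIter]
      have h1 : j / l / l ^ k = j / l ^ (k + 1) := by
        rw [Nat.div_div_eq_div_mul, ← pow_succ']
      have h2 : (j % l ^ (k + 1)) % l = j % l :=
        Nat.mod_mod_of_dvd j (dvd_pow_self l (Nat.succ_ne_zero k))
      have h3 : (j % l ^ (k + 1)) / l = (j / l) % l ^ k := by
        rw [pow_succ', Nat.mod_mul_right_div_self]
      rw [h1, h2, h3]


lemma substIter_succ_fix {A : Type*} (θ : A → ℕ → A) (l : ℕ) (a₀ : A)
    (ha₀ : θ a₀ 0 = a₀) {K n : ℕ} (hn : n < l ^ K) :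
    substIter θ l (K + 1) a₀ n = substIter θ l K a₀ n := by
  have h := substIter_add θ l K 1 a₀ n
  rw [Nat.add_comm 1 K] at h
  have h10 : substIter θ l 1 a₀ 0 = a₀ := by simpa [substIter] using ha₀
  rw [h, Nat.div_eq_of_lt hn, Nat.mod_eq_of_lt hn, h10]

lemma substIter_fixedPoint {A : Type*} (θ : A → ℕ → A) (l : ℕ) (hl : 2 ≤ l) (a₀ : A)
    (ha₀ : θ a₀ 0 = a₀) {K n : ℕ} (hn : n < l ^ K) :
    substIter θ l K a₀ n = substFixedPoint θ l a₀ n := by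
  have key : ∀ d K, n < l ^ K → substIter θ l (K + d) a₀ n = substIter θ l K a₀ n := by
    intro d
    induction d with
    | zero => intro K _; rfl
    | succ d ih =>
        intro K hK
        have h1 : n < l ^ (K + d) :=
          lt_of_lt_of_le hK (Nat.pow_le_pow_right (by omega) (by omega))
        rw [show K + (d + 1) = (K + d) + 1 by ring,
          substIter_succ_fix θ l a₀ ha₀ h1, ih K hK]
  have hn' : n < l ^ (n + 1) := by
    calc n < 2 ^ n := Nat.lt_two_pow_self
    _ ≤ 2 ^ (n + 1) := Nat.pow_le_pow_right (by omega) (by omega)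
    _ ≤ l ^ (n + 1) := Nat.pow_le_pow_left hl _
  have h1 := key (n + 1) K hn
  have h2 := key K (n + 1) hn'
  unfold substFixedPoint
  rw [Nat.add_comm K (n + 1)] at h1
  exact h1.symm.trans h2

open Classical in
noncomputable def badSet {A : Type*} (θ : A → ℕ → A) (l k : ℕ) : Finset ℕ :=
  (Finset.range (l ^ k)).filter
    (fun j => ¬ ∀ a b : A, substIter θ l k a j = substIter θ l k b j)

lemma badSet_card {A : Type*} (θ : A → ℕ → A) (l : ℕ) (hl : 2 ≤ l) {k₀ j₀ : ℕ}
    (hj₀ : j₀ < l ^ k₀)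
    (hconst : ∀ a b : A, substIter θ l k₀ a j₀ = substIter θ l k₀ b j₀) :
    ∀ m : ℕ, (badSet θ l (m * k₀)).card ≤ (l ^ k₀ - 1) ^ m := by
  classical
  have hP : 0 < l ^ k₀ := Nat.pow_pos (by omega)
  intro m
  induction m with
  | zero =>
      have hsub : badSet θ l 0 ⊆ Finset.range 1 := by
        intro j hj
        simp only [badSet, Finset.mem_filter, Finset.mem_range, pow_zero] at hj
        simpa using hj.1
      simpa using Finset.card_le_card hsub
  | succ m ih =>
      have hsub : badSet θ l ((m + 1) * k₀) ⊆
          ((badSet θ l (m * k₀)) ×ˢ ((Finset.range (l ^ k₀)).erase j₀)).image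
            (fun p : ℕ × ℕ => p.1 * l ^ k₀ + p.2) := by
        intro j hj
        simp only [badSet, Finset.mem_filter, Finset.mem_range] at hj
        obtain ⟨hjlt, hjnc⟩ := hj
        have hdecomp : ∀ a : A, substIter θ l ((m + 1) * k₀) a j
            = substIter θ l k₀ (substIter θ l (m * k₀) a (j / l ^ k₀)) (j % l ^ k₀) := by
          intro a
          rw [show (m + 1) * k₀ = m * k₀ + k₀ by ring]
          exact substIter_add θ l k₀ (m * k₀) a j
        have hr : j % l ^ k₀ ≠ j₀ := by
          intro h
          exact hjnc (fun a b => by rw [hdecomp a, hdecomp b, h, hconst])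
        have hq : j / l ^ k₀ ∈ badSet θ l (m * k₀) := by
          simp only [badSet, Finset.mem_filter, Finset.mem_range]
          constructor
          · have h1 : j < l ^ (m * k₀) * l ^ k₀ := by
              rw [← pow_add]
              exact lt_of_lt_of_le hjlt (le_of_eq (by ring_nf))
            exact Nat.div_lt_of_lt_mul (by rwa [mul_comm] at h1)
          · intro hcq
            exact hjnc (fun a b => by rw [hdecomp a, hdecomp b, hcq])
        refine Finset.mem_image.mpr ⟨(j / l ^ k₀, j % l ^ k₀), ?_, ?_⟩
        · exact Finset.mem_product.mpr ⟨hq, Finset.mem_erase.mpr ⟨hr,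
            Finset.mem_range.mpr (Nat.mod_lt _ hP)⟩⟩
        · show j / l ^ k₀ * l ^ k₀ + j % l ^ k₀ = j
          rw [mul_comm]
          exact Nat.div_add_mod j (l ^ k₀)
      calc (badSet θ l ((m + 1) * k₀)).card
          ≤ _ := Finset.card_le_card hsub
        _ ≤ ((badSet θ l (m * k₀)) ×ˢ ((Finset.range (l ^ k₀)).erase j₀)).card :=
            Finset.card_image_le
        _ = (badSet θ l (m * k₀)).card * (l ^ k₀ - 1) := by
            rw [Finset.card_product, Finset.card_erase_of_mem (Finset.mem_range.mpr hj₀),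
              Finset.card_range]
        _ ≤ (l ^ k₀ - 1) ^ m * (l ^ k₀ - 1) := Nat.mul_le_mul_right _ ih
        _ = (l ^ k₀ - 1) ^ (m + 1) := (pow_succ _ _).symm

lemma icc_div_bound (p ℓ N : ℕ) (hp : 0 < p) : (ℓ + N) / p + 1 - ℓ / p ≤ N / p + 2 := by
  have hdiv := Nat.add_div (a := ℓ) (b := N) hp
  have h2 : ℓ / p ≤ (ℓ + N) / p := Nat.div_le_div_right (Nat.le_add_right _ _)
  split_ifs at hdiv <;> omega

theorem fixedPoint_WRAP_of_column_eq_one'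
    {A : Type*} [Finite A] (l : ℕ) (hl : 2 ≤ l)
    (θ : A → ℕ → A)
    (a₀ : A) (ha₀ : θ a₀ 0 = a₀)
    (hc : columnNumber θ l = 1) :
    (∀ ε : ℝ, 0 < ε → ∃ k, 1 ≤ k ∧ ∃ v : ℕ → A,
      (∀ n, v (n + l ^ k) = v n) ∧ weylDist (substFixedPoint θ l a₀) v < ε) ∧
    WRAPSeq (substFixedPoint θ l a₀) := by
  classical
  set u := substFixedPoint θ l a₀ with hu
  -- extract a constant column
  have hmem : 1 ∈ { n : ℕ | ∃ k, 1 ≤ k ∧ ∃ j, j < l ^ k ∧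
      ((fun a => substIter θ l k a j) '' Set.univ).ncard = n } := by
    have hne : Set.Nonempty { n : ℕ | ∃ k, 1 ≤ k ∧ ∃ j, j < l ^ k ∧
        ((fun a => substIter θ l k a j) '' Set.univ).ncard = n } :=
      ⟨((fun a => substIter θ l 1 a 0) '' Set.univ).ncard, 1, le_refl 1, 0,
        by simpa using (by omega : 0 < l), rfl⟩
    have h := Nat.sInf_mem hne
    unfold columnNumber columnNumberOn at hc
    rwa [hc] at h
  obtain ⟨k₀, hk₀, j₀, hj₀, hcard⟩ := hmem
  obtain ⟨c0, hc0⟩ := Set.ncard_eq_one.mp hcard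
  have hmemi : ∀ a : A, substIter θ l k₀ a j₀ = c0 := by
    intro a
    have h1 : substIter θ l k₀ a j₀ ∈ (fun a => substIter θ l k₀ a j₀) '' Set.univ :=
      ⟨a, trivial, rfl⟩
    rwa [hc0, Set.mem_singleton_iff] at h1
  have hconst : ∀ a b : A, substIter θ l k₀ a j₀ = substIter θ l k₀ b j₀ :=
    fun a b => (hmemi a).trans (hmemi b).symm
  have main : ∀ ε : ℝ, 0 < ε → ∃ k, 1 ≤ k ∧ ∃ v : ℕ → A,
      (∀ n, v (n + l ^ k) = v n) ∧ weylDist u v < ε := by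
    intro ε hε
    have hP2 : 2 ≤ l ^ k₀ := le_trans hl (Nat.le_self_pow (by omega) l)
    have hPr : (0:ℝ) < ((l ^ k₀ : ℕ) : ℝ) := by exact_mod_cast (by omega : 0 < l ^ k₀)
    set ρ : ℝ := ((l ^ k₀ - 1 : ℕ) : ℝ) / ((l ^ k₀ : ℕ) : ℝ) with hρ
    have hρ0 : (0:ℝ) ≤ ρ := by positivity
    have hρ1 : ρ < 1 := by
      rw [hρ, div_lt_one hPr]
      exact_mod_cast Nat.sub_lt (by omega) one_pos
    obtain ⟨m0, hm0⟩ := exists_pow_lt_of_lt_one hε hρ1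
    set m : ℕ := max m0 1 with hm
    have hρm : ρ ^ m < ε :=
      lt_of_le_of_lt (pow_le_pow_of_le_one hρ0 hρ1.le (le_max_left _ _)) hm0
    set k : ℕ := m * k₀ with hkdef
    have hk1 : 1 ≤ k := by
      have : 1 ≤ m := le_max_right _ _
      calc 1 ≤ 1 * 1 := by norm_num
      _ ≤ m * k₀ := Nat.mul_le_mul this hk₀
    set p : ℕ := l ^ k with hpdef
    have hp0 : 0 < p := Nat.pow_pos (by omega)
    have hp0' : ((p : ℕ) : ℝ) ≠ 0 := by exact_mod_cast hp0.ne'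
    set v : ℕ → A := fun n => substIter θ l k a₀ (n % p) with hv
    have hper : ∀ n, v (n + p) = v n := by
      intro n
      show substIter θ l k a₀ ((n + p) % p) = substIter θ l k a₀ (n % p)
      rw [Nat.add_mod_right]
    -- matching on good residues
    have hmatch : ∀ n : ℕ, n % p ∉ badSet θ l k → u n = v n := by
      intro n hn
      have hconstr : ∀ a b : A, substIter θ l k a (n % p) = substIter θ l k b (n % p) := by
        by_contra hcn
        exact hn (Finset.mem_filter.mpr ⟨Finset.mem_range.mpr (Nat.mod_lt _ hp0), hcn⟩)
      set t : ℕ := n / p + 1 with ht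
      have hqt : n / p < l ^ t := by
        calc n / p < 2 ^ (n / p) := Nat.lt_two_pow_self
        _ ≤ 2 ^ t := Nat.pow_le_pow_right (by omega) (by omega)
        _ ≤ l ^ t := Nat.pow_le_pow_left hl _
      have hnlt : n < l ^ (t + k) := by
        have h1 : n < p * (n / p + 1) :=
          calc n = p * (n / p) + n % p := (Nat.div_add_mod n p).symm
          _ < p * (n / p) + p := Nat.add_lt_add_left (Nat.mod_lt n hp0) _
          _ = p * (n / p + 1) := by ring
        calc n < p * (n / p + 1) := h1
        _ ≤ p * l ^ t := Nat.mul_le_mul_left _ hqt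
        _ = l ^ (t + k) := by rw [hpdef, ← pow_add, Nat.add_comm]
      have e1 : substIter θ l (t + k) a₀ n = u n :=
        substIter_fixedPoint θ l hl a₀ ha₀ hnlt
      have e2 := substIter_add θ l k t a₀ n
      rw [e2] at e1
      rw [← e1]
      exact hconstr _ _
    -- density bound
    have hBcard : (badSet θ l k).card ≤ (l ^ k₀ - 1) ^ m := badSet_card θ l hl hj₀ hconst m
    have hBp : (badSet θ l k).card ≤ p := by
      calc (badSet θ l k).card ≤ (Finset.range (l ^ k)).card :=
            Finset.card_le_card (Finset.filter_subset _ _)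
      _ = p := by rw [Finset.card_range]
    set B : ℝ := ((badSet θ l k).card : ℝ) with hB
    have hB0 : 0 ≤ B := by positivity
    have hBρ : B ≤ ρ ^ m * p := by
      have hpm : ((p : ℕ) : ℝ) = (((l ^ k₀ : ℕ) : ℝ)) ^ m := by
        rw [hpdef]
        push_cast
        rw [← pow_mul, Nat.mul_comm]
      have : ρ ^ m * ((p : ℕ) : ℝ) = (((l ^ k₀ - 1 : ℕ) : ℝ)) ^ m := by
        rw [hρ, div_pow, hpm, div_mul_cancel₀]
        positivity
      rw [hB, this]
      calc ((badSet θ l k).card : ℝ) ≤ (((l ^ k₀ - 1) ^ m : ℕ) : ℝ) := Nat.cast_le.mpr hBcard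
      _ = (((l ^ k₀ - 1 : ℕ) : ℝ)) ^ m := by push_cast; ring
    -- the supremum bound for each N ≥ 1
    have hsup : ∀ N : ℕ, 1 ≤ N →
        (⨆ ℓ : ℕ, ⨆ _ : 1 ≤ ℓ,
          (({ n : ℕ | ℓ ≤ n ∧ n < ℓ + N ∧ u n ≠ v n }.ncard : ℝ) / N))
          ≤ ρ ^ m + 2 * p / N := by
      intro N hN
      have hN0 : (0:ℝ) < (N : ℝ) := by exact_mod_cast hN
      have hb0 : (0:ℝ) ≤ ρ ^ m + 2 * p / N := by positivity
      refine Real.iSup_le (fun ℓ => Real.iSup_le (fun _ => ?_) hb0) hb0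
      set F : Finset ℕ := (Finset.Ico ℓ (ℓ + N)).filter (fun n => u n ≠ v n) with hF
      have hset : { n : ℕ | ℓ ≤ n ∧ n < ℓ + N ∧ u n ≠ v n } = ↑F := by
        ext n
        simp [hF, Finset.mem_filter, Finset.mem_Ico, and_assoc]
      rw [hset, Set.ncard_coe_finset]
      -- counting
      have hFcard : F.card ≤ (badSet θ l k).card * (N / p + 2) := by
        have hmaps : ∀ n ∈ F, (fun n : ℕ => (n % p, n / p)) n ∈
            (badSet θ l k) ×ˢ Finset.Icc (ℓ / p) ((ℓ + N) / p) := by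
          intro n hn
          rw [hF, Finset.mem_filter, Finset.mem_Ico] at hn
          refine Finset.mem_product.mpr ⟨?_, ?_⟩
          · by_contra hbad
            exact hn.2 (hmatch n hbad)
          · exact Finset.mem_Icc.mpr ⟨Nat.div_le_div_right hn.1.1,
              Nat.div_le_div_right (le_of_lt hn.1.2)⟩
        have hinj : Set.InjOn (fun n : ℕ => (n % p, n / p)) ↑F := by
          intro n₁ _ n₂ _ h
          have h1 : n₁ % p = n₂ % p := (Prod.mk.injEq _ _ _ _).mp h |>.1
          have h2 : n₁ / p = n₂ / p := (Prod.mk.injEq _ _ _ _).mp h |>.2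
          calc n₁ = p * (n₁ / p) + n₁ % p := (Nat.div_add_mod n₁ p).symm
          _ = p * (n₂ / p) + n₂ % p := by rw [h1, h2]
          _ = n₂ := Nat.div_add_mod n₂ p
        calc F.card ≤ ((badSet θ l k) ×ˢ Finset.Icc (ℓ / p) ((ℓ + N) / p)).card :=
              Finset.card_le_card_of_injOn _ hmaps hinj
        _ = (badSet θ l k).card * (Finset.Icc (ℓ / p) ((ℓ + N) / p)).card :=
              Finset.card_product _ _
        _ ≤ (badSet θ l k).card * (N / p + 2) := by
              refine Nat.mul_le_mul_left _ ?_
              rw [Nat.card_Icc]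
              exact icc_div_bound p ℓ N hp0
      rw [div_le_iff₀ hN0]
      have step1 : (F.card : ℝ) ≤ B * (((N / p : ℕ) : ℝ) + 2) := by
        rw [hB]
        exact_mod_cast hFcard
      calc (F.card : ℝ) ≤ B * (((N / p : ℕ) : ℝ) + 2) := step1
      _ ≤ B * ((N : ℝ) / p + 2) := by
          refine mul_le_mul_of_nonneg_left (add_le_add_left Nat.cast_div_le 2) hB0
      _ = B * ((N : ℝ) / p) + 2 * B := by ring
      _ ≤ (ρ ^ m * p) * ((N : ℝ) / p) + 2 * p := by
          refine add_le_add (mul_le_mul_of_nonneg_right hBρ (by positivity)) ?_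
          have : B ≤ (p : ℝ) := by rw [hB]; exact_mod_cast hBp
          linarith
      _ = ρ ^ m * N + 2 * p := by field_simp
      _ = (ρ ^ m + 2 * p / N) * N := by field_simp
    -- limsup bound
    set G : ℕ → ℝ := fun N =>
      ⨆ ℓ : ℕ, ⨆ _ : 1 ≤ ℓ,
        (({ n : ℕ | ℓ ≤ n ∧ n < ℓ + N ∧ u n ≠ v n }.ncard : ℝ) / N) with hG
    have hG0 : ∀ N, 0 ≤ G N := fun N =>
      Real.iSup_nonneg fun ℓ => Real.iSup_nonneg fun _ => by positivity
    set ε' : ℝ := (ρ ^ m + ε) / 2 with hε'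
    have hε'1 : ρ ^ m < ε' := by rw [hε']; linarith
    have hε'2 : ε' < ε := by rw [hε']; linarith
    have ht : Filter.Tendsto (fun N : ℕ => 2 * (p:ℝ) / N) Filter.atTop (nhds 0) :=
      Filter.Tendsto.div_atTop tendsto_const_nhds tendsto_natCast_atTop_atTop
    have hev : ∀ᶠ N : ℕ in Filter.atTop, G N ≤ ε' := by
      filter_upwards [ht.eventually (eventually_le_nhds (by linarith : (0:ℝ) < ε' - ρ ^ m)),
        Filter.eventually_ge_atTop 1] with N h1 h2
      calc G N ≤ ρ ^ m + 2 * p / N := hsup N h2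
      _ ≤ ρ ^ m + (ε' - ρ ^ m) := by linarith
      _ = ε' := by ring
    have hlimsup : weylDist u v ≤ ε' := by
      have hcob : Filter.IsCoboundedUnder (· ≤ ·) Filter.atTop G :=
        isCoboundedUnder_le_of_le Filter.atTop hG0
      exact Filter.limsup_le_of_le hcob hev
    exact ⟨k, hk1, v, hper, lt_of_le_of_lt hlimsup hε'2⟩
  refine ⟨main, fun ε hε => ?_⟩
  obtain ⟨k, hk, v, hper, hdist⟩ := main ε hε
  exact ⟨v, ⟨l ^ k, Nat.one_le_pow _ _ (by omega), hper⟩, hdist⟩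

/-- If a primitive substitution `θ` of constant length `l ≥ 2` has
column number `1`, then its fixed point `u` is approximable in the Weyl pseudo-metric
by `l^k`-periodic sequences; in particular `u` is Weyl rationally almost periodic. -/
theorem fixedPoint_WRAP_of_column_eq_one
    {A : Type*} [Finite A] (l : ℕ) (hl : 2 ≤ l)
    (θ : A → ℕ → A) (hθ : SubstPrimitive θ l)
    (a₀ : A) (ha₀ : θ a₀ 0 = a₀)
    (hc : columnNumber θ l = 1) :
    (∀ ε : ℝ, 0 < ε → ∃ k, 1 ≤ k ∧ ∃ v : ℕ → A,
      (∀ n, v (n + l ^ k) = v n) ∧ weylDist (substFixedPoint θ l a₀) v < ε) ∧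
    WRAPSeq (substFixedPoint θ l a₀) := by
  exact fixedPoint_WRAP_of_column_eq_one' l hl θ a₀ ha₀ hc
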